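/- Fix t > 1 and set τ = t - 1/t. For 0 < β < τ, the improper integral J₃(τ,β) = ∫_β^τ (1/(sqrt(ζ²+4)·sqrt(τ²-ζ²)))·sqrt((ζ-β)/(ζ+β)) dζ satisfies: τ·J₃(τ,β) is finite, and as a function of τ (with β fixed), τ·J₃ ~ log τ as τ → ∞, i.e., (τ·J₃)/log τ → 1. -/

import Mathlib

open Real Filter Topology MeasureTheory

/-- The period integral `J₃(τ,β)` (with `α = β`) of the Weierstrass data of the family `𝒪`. -/
noncomputable def J₃ (τ β : ℝ) : ℝ :=
  ∫ ζ in β..τ, (1 / (Real.sqrt (ζ^2 + 4) * Real.sqrt (τ^2 - ζ^2))) * Real.sqrt ((ζ - β) / (ζ + β))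

section Aux
open Set

lemma sqrt4 : Real.sqrt 4 = 2 := by
  rw [show (4:ℝ) = 2^2 by norm_num, Real.sqrt_sq]; norm_num

lemma lemA (β τ : ℝ) (hβ : 0 < β) (hβτ : β < τ) :
    IntervalIntegrable
      (fun ζ => (1 / (Real.sqrt (ζ^2 + 4) * Real.sqrt (τ^2 - ζ^2))) * Real.sqrt ((ζ - β) / (ζ + β)))
      volume β τ := by
  have hτpos : 0 < τ := hβ.trans hβτ
  have hg : IntervalIntegrable (fun ζ => (1 / (2 * Real.sqrt (τ + β))) * (τ - ζ) ^ (-(1:ℝ)/2))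
      volume β τ := by
    have h1 : IntervalIntegrable (fun x : ℝ => x ^ (-(1:ℝ)/2)) volume 0 (τ - β) :=
      intervalIntegral.intervalIntegrable_rpow' (by norm_num)
    have h2 := (h1.comp_sub_left τ)
    simp only [sub_zero] at h2
    have h2' : IntervalIntegrable (fun x => (τ - x) ^ (-(1:ℝ)/2)) volume β τ := by
      simpa using h2.symm
    exact h2'.const_mul _
  apply hg.mono_fun
  · apply Measurable.aestronglyMeasurable
    fun_prop
  · filter_upwards [MeasureTheory.ae_restrict_mem measurableSet_uIoc] with ζ hζ
    rw [Set.uIoc_of_le hβτ.le] at hζ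
    obtain ⟨h1, h2⟩ := hζ
    simp only [Real.norm_eq_abs]
    have htζ : 0 ≤ τ - ζ := by linarith
    have hratio : Real.sqrt ((ζ - β) / (ζ + β)) ≤ 1 := by
      rw [show (1:ℝ) = Real.sqrt 1 by simp]
      apply Real.sqrt_le_sqrt
      rw [div_le_one (by linarith)]
      linarith
    have h4 : (2:ℝ) ≤ Real.sqrt (ζ^2 + 4) := by
      rw [← sqrt4]; exact Real.sqrt_le_sqrt (by nlinarith [sq_nonneg ζ])
    have h5 : Real.sqrt (τ + β) * Real.sqrt (τ - ζ) ≤ Real.sqrt (τ^2 - ζ^2) := by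
      rw [← Real.sqrt_mul (by linarith)]
      apply Real.sqrt_le_sqrt
      nlinarith
    have hbig : 2 * Real.sqrt (τ + β) * Real.sqrt (τ - ζ) ≤ Real.sqrt (ζ^2+4) * Real.sqrt (τ^2 - ζ^2) := by
      calc 2 * Real.sqrt (τ + β) * Real.sqrt (τ - ζ) = 2 * (Real.sqrt (τ + β) * Real.sqrt (τ - ζ)) := by ring
      _ ≤ Real.sqrt (ζ^2+4) * Real.sqrt (τ^2 - ζ^2) :=
          mul_le_mul h4 h5 (by positivity) (by positivity)
    rw [abs_of_nonneg (by positivity),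
        abs_of_nonneg (mul_nonneg (by positivity) (Real.rpow_nonneg htζ _))]
    have hrpow : (τ - ζ) ^ (-(1:ℝ)/2) = 1 / Real.sqrt (τ - ζ) := by
      rw [show (-(1:ℝ)/2) = -(1/2) by ring, Real.rpow_neg htζ, Real.sqrt_eq_rpow]; norm_num
    rw [hrpow]
    rcases eq_or_lt_of_le h2 with heq | hlt
    · subst heq
      simp [Real.sqrt_eq_zero']
    · have hpos : 0 < 2 * Real.sqrt (τ + β) * Real.sqrt (τ - ζ) := mul_pos (by positivity) (Real.sqrt_pos.2 (by linarith))
      calc (1 / (Real.sqrt (ζ^2 + 4) * Real.sqrt (τ^2 - ζ^2))) * Real.sqrt ((ζ - β) / (ζ + β))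
          ≤ (1 / (Real.sqrt (ζ^2 + 4) * Real.sqrt (τ^2 - ζ^2))) * 1 := by
            apply mul_le_mul_of_nonneg_left hratio (by positivity)
        _ = 1 / (Real.sqrt (ζ^2 + 4) * Real.sqrt (τ^2 - ζ^2)) := by ring
        _ ≤ 1 / (2 * Real.sqrt (τ + β) * Real.sqrt (τ - ζ)) :=
            one_div_le_one_div_of_le hpos hbig
        _ = (1 / (2 * Real.sqrt (τ + β))) * (1 / Real.sqrt (τ - ζ)) := by ring


lemma hInt (β τ : ℝ) (hβ : 0 < β) (hβτ : β < τ) :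
    IntervalIntegrable (fun ζ => τ / (ζ * Real.sqrt (τ^2 - ζ^2))) volume β τ := by
  have hτpos : 0 < τ := hβ.trans hβτ
  have hg : IntervalIntegrable (fun ζ => (τ / (β * Real.sqrt (τ + β))) * (τ - ζ) ^ (-(1:ℝ)/2))
      volume β τ := by
    have h1 : IntervalIntegrable (fun x : ℝ => x ^ (-(1:ℝ)/2)) volume 0 (τ - β) :=
      intervalIntegral.intervalIntegrable_rpow' (by norm_num)
    have h2 := (h1.comp_sub_left τ)
    simp only [sub_zero] at h2
    have h2' : IntervalIntegrable (fun x => (τ - x) ^ (-(1:ℝ)/2)) volume β τ := by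
      simpa using h2.symm
    exact h2'.const_mul _
  apply hg.mono_fun
  · apply Measurable.aestronglyMeasurable; fun_prop
  · filter_upwards [MeasureTheory.ae_restrict_mem measurableSet_uIoc] with ζ hζ
    rw [Set.uIoc_of_le hβτ.le] at hζ
    obtain ⟨h1, h2⟩ := hζ
    have htζ : 0 ≤ τ - ζ := by linarith
    simp only [Real.norm_eq_abs]
    rw [abs_of_nonneg (div_nonneg hτpos.le (mul_nonneg (by linarith) (Real.sqrt_nonneg _))),
        abs_of_nonneg (mul_nonneg (by positivity) (Real.rpow_nonneg htζ _))]
    have hrpow : (τ - ζ) ^ (-(1:ℝ)/2) = 1 / Real.sqrt (τ - ζ) := by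
      rw [show (-(1:ℝ)/2) = -(1/2) by ring, Real.rpow_neg htζ, Real.sqrt_eq_rpow]; norm_num
    rw [hrpow]
    have h5 : Real.sqrt (τ + β) * Real.sqrt (τ - ζ) ≤ Real.sqrt (τ^2 - ζ^2) := by
      rw [← Real.sqrt_mul (by linarith)]
      apply Real.sqrt_le_sqrt; nlinarith
    rcases eq_or_lt_of_le h2 with heq | hlt
    · subst heq; simp [Real.sqrt_eq_zero']
    · have hpos : 0 < β * (Real.sqrt (τ + β) * Real.sqrt (τ - ζ)) :=
        mul_pos hβ (mul_pos (Real.sqrt_pos.2 (by linarith)) (Real.sqrt_pos.2 (by linarith)))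
      have hbig : β * (Real.sqrt (τ + β) * Real.sqrt (τ - ζ)) ≤ ζ * Real.sqrt (τ^2 - ζ^2) :=
        mul_le_mul h1.le h5 (by positivity) (by linarith)
      calc τ / (ζ * Real.sqrt (τ^2 - ζ^2)) ≤ τ / (β * (Real.sqrt (τ + β) * Real.sqrt (τ - ζ))) :=
            div_le_div_of_nonneg_left hτpos.le hpos hbig
        _ = (τ / (β * Real.sqrt (τ + β))) * (1 / Real.sqrt (τ - ζ)) := by ring

lemma hFTC (β τ : ℝ) (hβ : 0 < β) (hβτ : β < τ) :
    ∫ ζ in β..τ, τ / (ζ * Real.sqrt (τ^2 - ζ^2))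
      = Real.log (τ + Real.sqrt (τ^2 - β^2)) - Real.log β := by
  have hτpos : 0 < τ := hβ.trans hβτ
  set F : ℝ → ℝ := fun ζ => Real.log ζ - Real.log (τ + Real.sqrt (τ^2 - ζ^2)) with hF
  have hcont : ContinuousOn F (Set.Icc β τ) := by
    apply ContinuousOn.sub
    · exact Real.continuousOn_log.comp continuousOn_id (fun x hx => ne_of_gt (lt_of_lt_of_le hβ hx.1))
    · apply Real.continuousOn_log.comp
      · exact (continuousOn_const.add ((Real.continuous_sqrt.comp_continuousOn
          (by fun_prop))))
      · intro x hx
        have : 0 ≤ Real.sqrt (τ^2 - x^2) := Real.sqrt_nonneg _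
        simp only [Set.mem_setOf_eq]
        intro hc; linarith [hc ▸ this]
  have hderiv : ∀ x ∈ Set.Ioo β τ, HasDerivWithinAt F (τ / (x * Real.sqrt (τ^2 - x^2))) (Set.Ioi x) x := by
    intro x hx
    obtain ⟨hx1, hx2⟩ := hx
    have hxpos : 0 < x := hβ.trans hx1
    have hin : 0 < τ^2 - x^2 := by nlinarith
    set s := Real.sqrt (τ^2 - x^2) with hs
    have hspos : 0 < s := Real.sqrt_pos.2 hin
    have hs2 : s^2 = τ^2 - x^2 := Real.sq_sqrt hin.le
    have d1 : HasDerivAt (fun ζ : ℝ => τ^2 - ζ^2) (-(2*x)) x := by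
      simpa using ((hasDerivAt_pow 2 x).const_sub (τ^2))
    have d2 : HasDerivAt (fun ζ : ℝ => Real.sqrt (τ^2 - ζ^2)) (1/(2*s) * (-(2*x))) x :=
      (Real.hasDerivAt_sqrt (ne_of_gt hin)).comp x d1
    have d3 : HasDerivAt (fun ζ : ℝ => τ + Real.sqrt (τ^2 - ζ^2)) (1/(2*s) * (-(2*x))) x := by
      simpa using d2.const_add τ
    have d4 : HasDerivAt (fun ζ : ℝ => Real.log (τ + Real.sqrt (τ^2 - ζ^2)))
        ((τ + s)⁻¹ * (1/(2*s) * (-(2*x)))) x :=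
      (Real.hasDerivAt_log (by positivity)).comp x d3
    have d5 : HasDerivAt Real.log x⁻¹ x := Real.hasDerivAt_log (ne_of_gt hxpos)
    have d6 : HasDerivAt F (x⁻¹ - (τ + s)⁻¹ * (1/(2*s) * (-(2*x)))) x := d5.sub d4
    have heq : x⁻¹ - (τ + s)⁻¹ * (1/(2*s) * (-(2*x))) = τ / (x * s) := by
      have hts : 0 < τ + s := by positivity
      field_simp
      linear_combination hs2
    rw [heq] at d6
    exact d6.hasDerivWithinAt
  have hint := hInt β τ hβ hβτ
  have := intervalIntegral.integral_eq_sub_of_hasDeriv_right_of_le hβτ.le hcont hderiv hint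
  rw [this, hF]
  have h00 : Real.sqrt (τ^2 - τ^2) = 0 := by simp
  simp only [h00]
  rw [add_zero]
  ring


lemma upper (β τ : ℝ) (hβ : 0 < β) (hβτ : β < τ) :
    τ * J₃ τ β ≤ Real.log 2 + Real.log τ - Real.log β := by
  have hτpos : 0 < τ := hβ.trans hβτ
  have key : τ * J₃ τ β ≤ ∫ ζ in β..τ, τ / (ζ * Real.sqrt (τ^2 - ζ^2)) := by
    rw [J₃, ← intervalIntegral.integral_const_mul]
    apply intervalIntegral.integral_mono_on hβτ.le ((lemA β τ hβ hβτ).const_mul τ)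
      (hInt β τ hβ hβτ)
    intro ζ hζ
    obtain ⟨h1, h2⟩ := hζ
    have hζpos : 0 < ζ := lt_of_lt_of_le hβ h1
    rcases eq_or_lt_of_le h2 with heq | hlt
    · subst heq; simp
    · have hspos : 0 < Real.sqrt (τ^2 - ζ^2) := Real.sqrt_pos.2 (by nlinarith)
      have hq : Real.sqrt (ζ^2+4) ≥ ζ := by
        calc Real.sqrt (ζ^2+4) ≥ Real.sqrt (ζ^2) := Real.sqrt_le_sqrt (by linarith)
          _ = ζ := Real.sqrt_sq hζpos.le
      have hr : Real.sqrt ((ζ - β) / (ζ + β)) ≤ 1 := by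
        rw [show (1:ℝ) = Real.sqrt 1 by simp]
        exact Real.sqrt_le_sqrt (by rw [div_le_one (by linarith)]; linarith)
      have hqpos : 0 < Real.sqrt (ζ^2+4) := lt_of_lt_of_le hζpos hq
      calc τ * ((1 / (Real.sqrt (ζ^2 + 4) * Real.sqrt (τ^2 - ζ^2))) * Real.sqrt ((ζ - β) / (ζ + β)))
          ≤ τ * ((1 / (Real.sqrt (ζ^2 + 4) * Real.sqrt (τ^2 - ζ^2))) * 1) := by
            apply mul_le_mul_of_nonneg_left _ hτpos.le
            exact mul_le_mul_of_nonneg_left hr (by positivity)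
        _ = τ / (Real.sqrt (ζ^2 + 4) * Real.sqrt (τ^2 - ζ^2)) := by ring
        _ ≤ τ / (ζ * Real.sqrt (τ^2 - ζ^2)) := by
            apply div_le_div_of_nonneg_left hτpos.le (by positivity)
            exact mul_le_mul_of_nonneg_right hq hspos.le
  rw [hFTC β τ hβ hβτ] at key
  have h1 : Real.log (τ + Real.sqrt (τ^2 - β^2)) ≤ Real.log (2*τ) := by
    apply Real.log_le_log (by positivity)
    have : Real.sqrt (τ^2 - β^2) ≤ τ := by
      calc Real.sqrt (τ^2 - β^2) ≤ Real.sqrt (τ^2) := Real.sqrt_le_sqrt (by nlinarith)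
        _ = τ := Real.sqrt_sq hτpos.le
    linarith
  rw [Real.log_mul (by norm_num) (ne_of_gt hτpos)] at h1
  linarith

lemma lower (β M τ : ℝ) (hβ : 0 < β) (hM : β < M) (hMτ : M < τ) :
    (Real.sqrt ((M-β)/(M+β)) / Real.sqrt (1 + 4/M^2)) * (Real.log τ - Real.log M)
      ≤ τ * J₃ τ β := by
  have hMpos : 0 < M := hβ.trans hM
  have hτpos : 0 < τ := hMpos.trans hMτ
  set c := Real.sqrt ((M-β)/(M+β)) / Real.sqrt (1 + 4/M^2) with hc
  have hcpos : 0 ≤ c := by positivity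
  set f := fun ζ => (1 / (Real.sqrt (ζ^2 + 4) * Real.sqrt (τ^2 - ζ^2))) * Real.sqrt ((ζ - β) / (ζ + β)) with hf
  have hfnn : ∀ ζ ∈ Set.Icc β τ, 0 ≤ τ * f ζ := by
    intro ζ hζ; exact mul_nonneg hτpos.le (by positivity)
  have hint1 : IntervalIntegrable (fun ζ => τ * f ζ) volume β τ := (lemA β τ hβ (hM.trans hMτ)).const_mul τ
  have hint2 : IntervalIntegrable (fun ζ => τ * f ζ) volume M τ := by
    apply hint1.mono_set
    rw [Set.uIcc_of_le hMτ.le, Set.uIcc_of_le (hM.trans hMτ).le]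
    exact Set.Icc_subset_Icc hM.le le_rfl
  have hint3 : IntervalIntegrable (fun ζ => τ * f ζ) volume β M := by
    apply hint1.mono_set
    rw [Set.uIcc_of_le hM.le, Set.uIcc_of_le (hM.trans hMτ).le]
    exact Set.Icc_subset_Icc le_rfl hMτ.le
  have hintc : IntervalIntegrable (fun ζ => c * (1/ζ)) volume M τ := by
    apply ContinuousOn.intervalIntegrable
    apply ContinuousOn.mul continuousOn_const
    apply ContinuousOn.div continuousOn_const continuousOn_id
    intro x hx
    rw [Set.uIcc_of_le hMτ.le] at hx
    exact ne_of_gt (lt_of_lt_of_le hMpos hx.1)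
  -- a.e. pointwise bound on [M, τ]
  have hae : (fun ζ => c * (1/ζ)) ≤ᵐ[volume.restrict (Set.Icc M τ)] (fun ζ => τ * f ζ) := by
    have hne : ∀ᵐ ζ : ℝ ∂volume.restrict (Set.Icc M τ), ζ ≠ τ := by
      apply ae_restrict_of_ae
      rw [MeasureTheory.ae_iff]
      have : {a : ℝ | ¬a ≠ τ} = {τ} := by ext x; simp
      rw [this]; exact measure_singleton τ
    filter_upwards [MeasureTheory.ae_restrict_mem measurableSet_Icc, hne] with ζ hζ hζτ
    obtain ⟨h1, h2⟩ := hζ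
    have hζpos : 0 < ζ := hMpos.trans_le h1
    have hlt : ζ < τ := lt_of_le_of_ne h2 hζτ
    have hspos : 0 < Real.sqrt (τ^2 - ζ^2) := Real.sqrt_pos.2 (by nlinarith)
    have hqpos : 0 < Real.sqrt (ζ^2+4) := Real.sqrt_pos.2 (by positivity)
    -- (a) ratio monotone
    have ha : Real.sqrt ((M-β)/(M+β)) ≤ Real.sqrt ((ζ-β)/(ζ+β)) := by
      apply Real.sqrt_le_sqrt
      rw [div_le_div_iff₀ (by linarith) (by linarith)]
      nlinarith
    -- (b)
    have hb : Real.sqrt (ζ^2+4) ≤ Real.sqrt (1 + 4/M^2) * ζ := by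
      have : Real.sqrt (ζ^2+4) ≤ Real.sqrt ((1 + 4/M^2) * ζ^2) := by
        apply Real.sqrt_le_sqrt
        have h4 : (4:ℝ) ≤ 4/M^2 * ζ^2 := by
          rw [div_mul_eq_mul_div, le_div_iff₀ (by positivity)]
          nlinarith
        nlinarith
      calc Real.sqrt (ζ^2+4) ≤ Real.sqrt ((1 + 4/M^2) * ζ^2) := this
        _ = Real.sqrt (1 + 4/M^2) * ζ := by
            rw [Real.sqrt_mul (by positivity), Real.sqrt_sq hζpos.le]
    -- (c)
    have hcc : Real.sqrt (τ^2 - ζ^2) ≤ τ := by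
      calc Real.sqrt (τ^2 - ζ^2) ≤ Real.sqrt (τ^2) := Real.sqrt_le_sqrt (by nlinarith)
        _ = τ := Real.sqrt_sq hτpos.le
    have hrw : τ * f ζ = (τ / Real.sqrt (τ^2 - ζ^2)) * (Real.sqrt ((ζ - β) / (ζ + β)) / Real.sqrt (ζ^2+4)) := by
      rw [hf]; ring
    rw [hrw]
    have step1 : c * (1/ζ) ≤ Real.sqrt ((ζ-β)/(ζ+β)) / Real.sqrt (ζ^2+4) := by
      rw [hc]
      calc Real.sqrt ((M-β)/(M+β)) / Real.sqrt (1 + 4/M^2) * (1/ζ)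
          = Real.sqrt ((M-β)/(M+β)) / (Real.sqrt (1 + 4/M^2) * ζ) := by ring
        _ ≤ Real.sqrt ((ζ-β)/(ζ+β)) / (Real.sqrt (1 + 4/M^2) * ζ) := by
            exact (div_le_div_iff_of_pos_right (mul_pos (by positivity) hζpos)).2 ha
        _ ≤ Real.sqrt ((ζ-β)/(ζ+β)) / Real.sqrt (ζ^2+4) := by
            apply div_le_div_of_nonneg_left (Real.sqrt_nonneg _) hqpos hb
    calc c * (1/ζ) ≤ Real.sqrt ((ζ-β)/(ζ+β)) / Real.sqrt (ζ^2+4) := step1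
      _ = 1 * (Real.sqrt ((ζ-β)/(ζ+β)) / Real.sqrt (ζ^2+4)) := (one_mul _).symm
      _ ≤ (τ / Real.sqrt (τ^2 - ζ^2)) * (Real.sqrt ((ζ - β) / (ζ + β)) / Real.sqrt (ζ^2+4)) := by
          apply mul_le_mul_of_nonneg_right _ (by positivity)
          rw [le_div_iff₀ hspos]; linarith
  have key : ∫ ζ in M..τ, c * (1/ζ) ≤ ∫ ζ in M..τ, τ * f ζ :=
    intervalIntegral.integral_mono_ae_restrict hMτ.le hintc hint2 hae
  have hval : ∫ ζ in M..τ, c * (1/ζ) = c * (Real.log τ - Real.log M) := by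
    rw [intervalIntegral.integral_const_mul, integral_one_div, Real.log_div (ne_of_gt hτpos) (ne_of_gt hMpos)]
    intro h
    rw [Set.uIcc_of_le hMτ.le] at h
    exact absurd h.1 (not_le.2 hMpos)
  have hsplit : τ * J₃ τ β = (∫ ζ in β..M, τ * f ζ) + ∫ ζ in M..τ, τ * f ζ := by
    rw [J₃, ← intervalIntegral.integral_const_mul,
      intervalIntegral.integral_add_adjacent_intervals hint3 hint2]
  have hnn : 0 ≤ ∫ ζ in β..M, τ * f ζ := by
    apply intervalIntegral.integral_nonneg hM.le
    intro u hu
    exact mul_nonneg hτpos.le (by positivity)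
  calc c * (Real.log τ - Real.log M) = ∫ ζ in M..τ, c * (1/ζ) := hval.symm
    _ ≤ ∫ ζ in M..τ, τ * f ζ := key
    _ ≤ τ * J₃ τ β := by rw [hsplit]; linarith


lemma c_tendsto (β : ℝ) (hβ : 0 < β) :
    Tendsto (fun M => Real.sqrt ((M-β)/(M+β)) / Real.sqrt (1 + 4/M^2)) atTop (nhds 1) := by
  have hβM : Tendsto (fun M : ℝ => β / M) atTop (nhds 0) :=
    tendsto_const_nhds.div_atTop tendsto_id
  have h1 : Tendsto (fun M : ℝ => (M-β)/(M+β)) atTop (nhds 1) := by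
    have heq : (fun M : ℝ => (M-β)/(M+β)) =ᶠ[atTop] fun M => (1 - β/M)/(1 + β/M) := by
      filter_upwards [eventually_gt_atTop 0] with M hM
      rw [div_eq_div_iff (by positivity) (by positivity)]
      field_simp
    rw [tendsto_congr' heq]
    have := ((tendsto_const_nhds (x := (1:ℝ))).sub hβM).div
      ((tendsto_const_nhds (x := (1:ℝ))).add hβM) (by norm_num)
    simp at this; exact this
  have h2 : Tendsto (fun M : ℝ => Real.sqrt ((M-β)/(M+β))) atTop (nhds 1) := by
    have := (Real.continuous_sqrt.continuousAt (x := (1:ℝ))).tendsto.comp h1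
    simp at this; exact this
  have h3 : Tendsto (fun M : ℝ => 1 + 4 / M^2) atTop (nhds 1) := by
    have h4 : Tendsto (fun M : ℝ => 4 / M^2) atTop (nhds 0) :=
      tendsto_const_nhds.div_atTop (tendsto_pow_atTop (by norm_num))
    simpa using ((tendsto_const_nhds (x := (1:ℝ))).add h4)
  have h5 : Tendsto (fun M : ℝ => Real.sqrt (1 + 4/M^2)) atTop (nhds 1) := by
    have := (Real.continuous_sqrt.continuousAt (x := (1:ℝ))).tendsto.comp h3
    simp at this; exact this
  have := h2.div h5 (by norm_num)
  simp at this; exact this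

end Aux

theorem stmt_19 (t : ℝ) (ht : 1 < t) (τ β : ℝ) (hτ : τ = t - 1/t) (hβ : 0 < β) (hβτ : β < τ) :
    IntervalIntegrable
      (fun ζ => (1 / (Real.sqrt (ζ^2 + 4) * Real.sqrt (τ^2 - ζ^2))) * Real.sqrt ((ζ - β) / (ζ + β)))
      volume β τ ∧
    Tendsto (fun τ' : ℝ => τ' * J₃ τ' β / Real.log τ') atTop (nhds 1) := by
  refine ⟨lemA β τ hβ hβτ, ?_⟩
  rw [Metric.tendsto_atTop]
  intro ε hε
  obtain ⟨M, hM1, hM2, hM3⟩ : ∃ M : ℝ,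
      (1 - ε/4 < Real.sqrt ((M-β)/(M+β)) / Real.sqrt (1 + 4/M^2)) ∧ β + 1 ≤ M ∧ 2 ≤ M := by
    have e1 := (c_tendsto β hβ).eventually (eventually_gt_nhds (show 1 - ε/4 < 1 by linarith))
    obtain ⟨M, h⟩ := (e1.and ((eventually_ge_atTop (β+1)).and (eventually_ge_atTop 2))).exists
    exact ⟨M, h.1, h.2.1, h.2.2⟩
  set c := Real.sqrt ((M-β)/(M+β)) / Real.sqrt (1 + 4/M^2) with hc
  have hMβ : β < M := by linarith
  have hM1' : 1 < M := by linarith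
  have hD : 0 ≤ Real.log M := Real.log_nonneg hM1'.le
  set C := |Real.log 2 - Real.log β| with hCdef
  have hC0 : 0 ≤ C := abs_nonneg _
  set D := Real.log M with hDdef
  set K := max (max 1 (D+1)) ((C+D)*2/ε + 1) with hK
  refine ⟨max (M+1) (Real.exp K), fun τ' hτ' => ?_⟩
  have hτM : M + 1 ≤ τ' := le_trans (le_max_left _ _) hτ'
  have hτ'pos : 0 < τ' := by linarith
  have hlogτ : K ≤ Real.log τ' := by
    have hh : Real.exp K ≤ τ' := le_trans (le_max_right _ _) hτ'
    calc K = Real.log (Real.exp K) := (Real.log_exp K).symm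
      _ ≤ Real.log τ' := Real.log_le_log (Real.exp_pos K) hh
  have hK1 : (1:ℝ) ≤ K := le_trans (le_max_left _ _) (le_max_left _ _)
  have hKD : D + 1 ≤ K := le_trans (le_max_right _ _) (le_max_left _ _)
  have hKC : (C+D)*2/ε + 1 ≤ K := le_max_right _ _
  have hlt : 0 < Real.log τ' := by linarith
  have hup := upper β τ' hβ (by linarith : β < τ')
  have hlow := lower β M τ' hβ hMβ (by linarith : M < τ')
  set L := τ' * J₃ τ' β with hL
  have hub : L / Real.log τ' ≤ 1 + C / Real.log τ' := by
    rw [div_le_iff₀ hlt]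
    have h2C : Real.log 2 - Real.log β ≤ C := le_abs_self _
    calc L ≤ Real.log 2 + Real.log τ' - Real.log β := hup
      _ ≤ Real.log τ' + C := by linarith
      _ = (1 + C / Real.log τ') * Real.log τ' := by field_simp
  have hCle : C / Real.log τ' ≤ ε/2 := by
    rw [div_le_iff₀ hlt]
    have h3 : (C+D)*2/ε ≤ Real.log τ' := by linarith
    rw [div_le_iff₀ hε] at h3
    nlinarith
  have hDle : D / Real.log τ' ≤ ε/2 := by
    rw [div_le_iff₀ hlt]
    have h3 : (C+D)*2/ε ≤ Real.log τ' := by linarith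
    rw [div_le_iff₀ hε] at h3
    nlinarith
  have hx0 : 0 ≤ D / Real.log τ' := div_nonneg hD hlt.le
  have hx1 : D / Real.log τ' ≤ 1 := by
    rw [div_le_one hlt]; linarith
  have hstep : c * (1 - D / Real.log τ') ≤ L / Real.log τ' := by
    rw [le_div_iff₀ hlt]
    calc c * (1 - D / Real.log τ') * Real.log τ' = c * (Real.log τ' - D) := by
          field_simp
      _ ≤ L := hlow
  have hc1 : 1 - ε/4 ≤ c := hM1.le
  have hlb : 1 - ε/4 - ε/2 ≤ L / Real.log τ' := by
    have key : 1 - ε/4 - ε/2 ≤ c * (1 - D / Real.log τ') := by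
      nlinarith
    linarith
  rw [Real.dist_eq, abs_lt]
  constructor <;> [linarith; linarith]
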